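/- arXiv:1608.03116 — 2 statements merged into one kernel-verified Lean document; each statement's English description precedes it below -/
import Mathlib

section
/- For every positive integer n, there exists a semilattice indecomposable semigroup S with |S| = n containing a subsemilattice Y with |Y| = 2⌊(n − 1)/4⌋ + 1. -/
/-- A semigroup is semilattice indecomposable if every semigroup homomorphism from it to a
semilattice (a commutative idempotent semigroup) is constant. -/
def SemilatticeIndecomposable (S : Type) [Semigroup S] : Prop :=
  ∀ (T : Type) [Semigroup T],
    (∀ a b : T, a * b = b * a) → (∀ a : T, a * a = a) →
      ∀ f : S →ₙ* T, ∀ x y : S, f x = f y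

/-- A subsemilattice of a semigroup: a subsemigroup consisting of pairwise commuting
idempotents. -/
def IsSubsemilattice {S : Type} [Mul S] (Y : Set S) : Prop :=
  (∀ a ∈ Y, ∀ b ∈ Y, a * b ∈ Y) ∧ (∀ a ∈ Y, a * a = a) ∧
    (∀ a ∈ Y, ∀ b ∈ Y, a * b = b * a)

abbrev Carrier (k r : ℕ) : Type := Option (Fin k × Fin 2 × Fin 2 ⊕ Fin r)

instance (k r : ℕ) : Fintype (Carrier k r) :=
  inferInstanceAs (Fintype (Option (Fin k × Fin 2 × Fin 2 ⊕ Fin r)))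

instance (k r : ℕ) : DecidableEq (Carrier k r) :=
  inferInstanceAs (DecidableEq (Option (Fin k × Fin 2 × Fin 2 ⊕ Fin r)))

def cmul {k r : ℕ} : Carrier k r → Carrier k r → Carrier k r
  | some (Sum.inl (y, i, j)), some (Sum.inl (y', i', j')) =>
      if j = i' then some (Sum.inl (min y y', i, j')) else none
  | _, _ => none

theorem cmul_none_left {k r : ℕ} (b : Carrier k r) : cmul none b = none := rfl

theorem cmul_inr_left {k r : ℕ} (z : Fin r) (b : Carrier k r) :
    cmul (some (Sum.inr z) : Carrier k r) b = none := rfl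

theorem cmul_none_right {k r : ℕ} (a : Carrier k r) : cmul a none = none := by
  rcases a with _ | (⟨y, i, j⟩ | z) <;> rfl

theorem cmul_inr_right {k r : ℕ} (a : Carrier k r) (z : Fin r) :
    cmul a (some (Sum.inr z)) = none := by
  rcases a with _ | (⟨y, i, j⟩ | z') <;> rfl

theorem cmul_inl_inl {k r : ℕ} (y y' : Fin k) (i j i' j' : Fin 2) :
    cmul (some (Sum.inl (y, i, j)) : Carrier k r) (some (Sum.inl (y', i', j'))) =
      if j = i' then some (Sum.inl (min y y', i, j')) else none := rfl

instance instCarrierSemigroup (k r : ℕ) : Semigroup (Carrier k r) where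
  mul := cmul
  mul_assoc a b c := by
    show cmul (cmul a b) c = cmul a (cmul b c)
    rcases a with _ | (⟨y, i, j⟩ | z) <;>
      rcases b with _ | (⟨y', i', j'⟩ | z') <;>
      rcases c with _ | (⟨y'', i'', j''⟩ | z'') <;>
      simp only [cmul_none_left, cmul_none_right, cmul_inr_left, cmul_inr_right, cmul_inl_inl]
    by_cases h1 : j = i' <;> by_cases h2 : j' = i'' <;>
      simp [cmul_none_left, cmul_none_right, cmul_inl_inl, h1, h2, min_assoc]

theorem fin2_succ_ne : ∀ t : Fin 2, t + 1 ≠ t := by decide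

theorem cmul_eq {k r : ℕ} (a b : Carrier k r) : a * b = cmul a b := rfl

theorem carrier_indec (k r : ℕ) : SemilatticeIndecomposable (Carrier k r) := by
  intro T _ hcomm hidem f x₀ y₀
  have hmul : ∀ a b : Carrier k r, a * b = cmul a b := fun _ _ => rfl
  have hnil : ∀ u : Carrier k r, cmul u u = none → f u = f none := by
    intro u hu
    have h := map_mul f u u
    rw [hmul, hu] at h
    have h2 := hidem (f u)
    rw [← h2, ← h]
  have key : ∀ x : Carrier k r, f x = f none := by
    intro x
    rcases x with _ | (⟨y, i, j⟩ | z)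
    · rfl
    · by_cases hij : j = i
      · subst hij
        set v : Carrier k r := some (Sum.inl (y, j, j + 1)) with hv
        set w : Carrier k r := some (Sum.inl (y, j + 1, j)) with hw
        have hvw : cmul v w = some (Sum.inl (y, j, j)) := by
          rw [hv, hw, cmul_inl_inl, if_pos rfl, min_self]
        have hvn : f v = f none := by
          apply hnil
          rw [hv, cmul_inl_inl, if_neg (fin2_succ_ne j)]
        have hwn : f w = f none := by
          apply hnil
          rw [hw, cmul_inl_inl, if_neg (fun h => fin2_succ_ne j h.symm)]
        calc f (some (Sum.inl (y, j, j))) = f (v * w) := by rw [hmul, hvw]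
          _ = f v * f w := map_mul f v w
          _ = f none * f none := by rw [hvn, hwn]
          _ = f none := hidem (f none)
      · apply hnil
        rw [cmul_inl_inl, if_neg hij]
    · apply hnil; rfl
  rw [key x₀, key y₀]

/-- For every positive integer `n` there is a semilattice indecomposable semigroup of
cardinality `n` containing a subsemilattice of cardinality `2⌊(n-1)/4⌋ + 1`. -/
theorem stmt_12 (n : ℕ) (hn : 0 < n) :
    ∃ (S : Type) (instS : Semigroup S) (_ : Fintype S),
      Fintype.card S = n ∧ @SemilatticeIndecomposable S instS ∧
        ∃ Y : Set S, @IsSubsemilattice S instS.toMul Y ∧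
          Y.ncard = 2 * ((n - 1) / 4) + 1 := by
  set k := (n - 1) / 4 with hk
  set r := (n - 1) % 4 with hr
  refine ⟨Carrier k r, instCarrierSemigroup k r, inferInstance, ?_, carrier_indec k r, ?_⟩
  · have hdm : 4 * k + r = n - 1 := Nat.div_add_mod (n - 1) 4
    have : Fintype.card (Carrier k r) = (k * (2 * 2) + r) + 1 := by
      simp [Carrier, Fintype.card_option, Fintype.card_sum, Fintype.card_prod, Fintype.card_fin]
    omega
  · set g : Fin k × Fin 2 → Carrier k r := fun p => some (Sum.inl (p.1, p.2, p.2)) with hg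
    have hginj : Function.Injective g := by
      intro ⟨a, b⟩ ⟨c, d⟩ h
      have h2 : (Sum.inl (a, b, b) : Fin k × Fin 2 × Fin 2 ⊕ Fin r) = Sum.inl (c, d, d) :=
        Option.some.inj h
      obtain ⟨h3, h4, -⟩ : a = c ∧ b = d ∧ b = d := by simpa using Sum.inl.inj h2
      simp [h3, h4]
    set F : Finset (Carrier k r) := insert none (Finset.univ.image g) with hF
    refine ⟨↑F, ⟨?_, ?_, ?_⟩, ?_⟩
    · -- closure
      intro a ha b hb
      simp only [hF, Finset.coe_insert, Set.mem_insert_iff, Finset.coe_image,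
        Finset.coe_univ, Set.image_univ, Set.mem_range] at ha hb ⊢
      rcases ha with rfl | ⟨⟨y, i⟩, rfl⟩
      · left; exact cmul_none_left b
      rcases hb with rfl | ⟨⟨y', i'⟩, rfl⟩
      · left; exact cmul_none_right _
      by_cases h : i = i'
      · subst h
        right
        exact ⟨(min y y', i), by simp [hg, cmul_eq, cmul_inl_inl]⟩
      · left
        simp [hg, cmul_eq, cmul_inl_inl, h]
    · -- idempotent
      intro a ha
      simp only [hF, Finset.coe_insert, Set.mem_insert_iff, Finset.coe_image,
        Finset.coe_univ, Set.image_univ, Set.mem_range] at ha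
      rcases ha with rfl | ⟨⟨y, i⟩, rfl⟩
      · exact cmul_none_left _
      · show g (y, i) * g (y, i) = g (y, i)
        simp [hg, cmul_eq, cmul_inl_inl]
    · -- commuting
      intro a ha b hb
      simp only [hF, Finset.coe_insert, Set.mem_insert_iff, Finset.coe_image,
        Finset.coe_univ, Set.image_univ, Set.mem_range] at ha hb
      rcases ha with rfl | ⟨⟨y, i⟩, rfl⟩
      · rw [cmul_eq, cmul_eq, cmul_none_left, cmul_none_right]
      rcases hb with rfl | ⟨⟨y', i'⟩, rfl⟩
      · rw [cmul_eq, cmul_eq, cmul_none_left, cmul_none_right]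
      by_cases h : i = i'
      · subst h
        simp [hg, cmul_eq, cmul_inl_inl, min_comm]
      · simp [hg, cmul_eq, cmul_inl_inl, h, Ne.symm h]
    · -- cardinality
      rw [Set.ncard_coe_finset, hF]
      have hnone : (none : Carrier k r) ∉ Finset.univ.image g := by
        simp [hg]
      rw [Finset.card_insert_of_notMem hnone, Finset.card_image_of_injective _ hginj,
        Finset.card_univ, Fintype.card_prod, Fintype.card_fin, Fintype.card_fin]
      omega
end

section
/- Every finite semigroup S can be embedded into a semilattice indecomposable semigroup with exactly 4|S| + 1 elements. -/
/-- Multiplication of the nonzero part of the 5-element Brandt semigroup `B₂`,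
with `0 = e`, `1 = f`, `2 = a`, `3 = b`. -/
def bmul : Fin 4 → Fin 4 → Option (Fin 4)
  | 0, 0 => some 0
  | 0, 2 => some 2
  | 2, 1 => some 2
  | 2, 3 => some 0
  | 3, 2 => some 1
  | 3, 0 => some 3
  | 1, 3 => some 3
  | 1, 1 => some 1
  | _, _ => none

lemma bmul_assoc_key : ∀ x y z : Fin 4,
    (bmul x y).bind (fun w => bmul w z) = (bmul y z).bind (fun w => bmul x w) := by
  decide

section construction

variable (S : Type) [Semigroup S]

/-- The Rees quotient of `S⁰ × B₂`. -/
def tmul : Option (S × Fin 4) → Option (S × Fin 4) → Option (S × Fin 4)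
  | some (s, x), some (t, y) => (bmul x y).map (fun z => (s * t, z))
  | _, _ => none

lemma tmul_assoc (a b c : Option (S × Fin 4)) :
    tmul S (tmul S a b) c = tmul S a (tmul S b c) := by
  match a, b, c with
  | none, _, _ => cases b <;> rfl
  | some _, none, _ => cases c <;> rfl
  | some _, some _, none =>
      simp only [tmul]
      cases bmul _ _ <;> rfl
  | some (s, x), some (t, y), some (u, z) =>
      have h1 : tmul S ((bmul x y).map fun w => (s * t, w)) (some (u, z)) =
          Option.map (fun v => (s * t * u, v)) ((bmul x y).bind (fun w => bmul w z)) := by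
        cases bmul x y <;> rfl
      have h2 : tmul S (some (s, x)) ((bmul y z).map fun w => (t * u, w)) =
          Option.map (fun v => (s * (t * u), v)) ((bmul y z).bind (fun w => bmul x w)) := by
        cases bmul y z <;> rfl
      show tmul S ((bmul x y).map fun w => (s * t, w)) (some (u, z)) =
          tmul S (some (s, x)) ((bmul y z).map fun w => (t * u, w))
      rw [h1, h2, bmul_assoc_key, mul_assoc]

instance TSemigroup : Semigroup (Option (S × Fin 4)) where
  mul := tmul S
  mul_assoc := tmul_assoc S

lemma tmul_def (a b : Option (S × Fin 4)) :
    a * b = tmul S a b := rfl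

end construction

/-- Every finite semigroup `S` can be embedded into a semilattice indecomposable semigroup
with exactly `4|S| + 1` elements. -/
theorem stmt_14 (S : Type) [Semigroup S] [Fintype S] :
    ∃ (T : Type) (instT : Semigroup T) (_ : Fintype T),
      Fintype.card T = 4 * Fintype.card S + 1 ∧
      @SemilatticeIndecomposable T instT ∧
      ∃ f : S → T, Function.Injective f ∧
        ∀ x y : S, f (x * y) = @HMul.hMul T T T (@instHMul T instT.toMul) (f x) (f y) := by
  refine ⟨Option (S × Fin 4), TSemigroup S, inferInstance, ?_, ?_, ?_⟩
  · simp [Fintype.card_option, Fintype.card_prod]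
    ring
  · intro T' _ hcomm hidem g x y
    -- every value of g equals g none
    have hnone : ∀ z : Option (S × Fin 4), g z = g none := by
      intro z
      have key : ∀ (a b : Option (S × Fin 4)), g (tmul S a b) = g a * g b := by
        intro a b; exact g.map_mul a b
      have gz0 : g none * g none = g none := hidem _
      match z with
      | none => rfl
      | some (s, i) =>
        have hab : ∀ s : S, g (some (s, 2)) = g none := by
          intro s
          have : g (some (s, (2 : Fin 4))) = g (some (s, 2)) * g (some (s, 2)) :=
            (hidem _).symm
          rw [← key] at this
          simpa [tmul, bmul] using this
        have hbb : ∀ s : S, g (some (s, 3)) = g none := by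
          intro s
          have : g (some (s, (3 : Fin 4))) = g (some (s, 3)) * g (some (s, 3)) :=
            (hidem _).symm
          rw [← key] at this
          simpa [tmul, bmul] using this
        have he2 : ∀ s : S, g (some (s * s, (0 : Fin 4))) = g none := by
          intro s
          have := key (some (s, 2)) (some (s, 3))
          simp only [tmul, bmul, Option.map_some] at this
          rw [this, hab, hbb, gz0]
        have hf2 : ∀ s : S, g (some (s * s, (1 : Fin 4))) = g none := by
          intro s
          have := key (some (s, 3)) (some (s, 2))
          simp only [tmul, bmul, Option.map_some] at this
          rw [this, hab, hbb, gz0]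
        fin_cases i
        · -- i = 0 (e)
          have : g (some (s, (0 : Fin 4))) = g (some (s, 0)) * g (some (s, 0)) :=
            (hidem _).symm
          rw [← key] at this
          simp only [tmul, bmul, Option.map_some] at this
          exact this.trans (he2 s)
        · -- i = 1 (f)
          have : g (some (s, (1 : Fin 4))) = g (some (s, 1)) * g (some (s, 1)) :=
            (hidem _).symm
          rw [← key] at this
          simp only [tmul, bmul, Option.map_some] at this
          exact this.trans (hf2 s)
        · exact hab s
        · exact hbb s
    rw [hnone x, hnone y]
  · refine ⟨fun s => some (s, 0), ?_, ?_⟩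
    · intro a b h
      simpa using h
    · intro x y
      show (some (x * y, (0 : Fin 4)) : Option (S × Fin 4)) =
        tmul S (some (x, 0)) (some (y, 0))
      simp [tmul, bmul]
end
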